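/- Assume: (i) for every x ∈ X and ξ ∈ Ξ the feasible set {z : Wz = h(ξ) − T(ξ)x, z ≥ 0} is nonempty; (ii) for every x ∈ X and ξ ∈ Ξ there exists π in the dual feasible set D = {π ∈ ℝ^m : Wᵀπ ≤ q} with πᵀ(h(ξ) − T(ξ)x) = Q(x,ξ); (iii) ‖π‖_∞ ≤ M_π for every π ∈ D; (iv) ‖x‖_∞ ≤ r for all x ∈ X. Then for all x ∈ X and all ξ, ξ' ∈ Ξ, the two-sided bound |Q(x,ξ) − Q(x,ξ')| ≤ M_π·(‖h(ξ) − h(ξ')‖₁ + r·‖T(ξ) − T(ξ')‖₁) holds. -/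

import Mathlib

open Matrix

/-- Value of the second-stage linear program with fixed recourse matrix `W`, cost `q`
and right-hand side `b`: `inf { qᵀz : Wz = b, z ≥ 0 }`. -/
noncomputable def lpValue {m k : ℕ} (W : Matrix (Fin m) (Fin k) ℝ) (q : Fin k → ℝ)
    (b : Fin m → ℝ) : ℝ :=
  sInf {r : ℝ | ∃ z : Fin k → ℝ, (∀ i, 0 ≤ z i) ∧ W.mulVec z = b ∧ r = q ⬝ᵥ z}

lemma weak_duality {m k : ℕ} (W : Matrix (Fin m) (Fin k) ℝ) (q : Fin k → ℝ)
    (b : Fin m → ℝ) (π : Fin m → ℝ) (hπ : ∀ j, Wᵀ.mulVec π j ≤ q j)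
    (z0 : Fin k → ℝ) (hz0 : ∀ i, 0 ≤ z0 i) (hWz0 : W.mulVec z0 = b) :
    π ⬝ᵥ b ≤ lpValue W q b := by
  refine le_csInf ⟨q ⬝ᵥ z0, z0, hz0, hWz0, rfl⟩ ?_
  rintro t ⟨z, hz, hWz, rfl⟩
  have hd : π ⬝ᵥ b = Wᵀ.mulVec π ⬝ᵥ z := by
    rw [← hWz, Matrix.dotProduct_mulVec, Matrix.mulVec_transpose]
  rw [hd]
  exact Finset.sum_le_sum fun j _ => mul_le_mul_of_nonneg_right (hπ j) (hz j)

/-- Under relatively complete recourse, dual strong-duality attainment,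
bounded dual feasible set and bounded first stage, the two-sided sensitivity bound
`|Q(x,ξ) − Q(x,ξ')| ≤ M_π·(‖h(ξ) − h(ξ')‖₁ + r·‖T(ξ) − T(ξ')‖₁)` holds for all
`x ∈ X` and all `ξ, ξ' ∈ Ξ`. -/
theorem stmt9 {Ξ : Type*} {n m k : ℕ}
    (X : Set (Fin n → ℝ)) (hX : X.Nonempty)
    (W : Matrix (Fin m) (Fin k) ℝ) (q : Fin k → ℝ)
    (h : Ξ → Fin m → ℝ) (T : Ξ → Matrix (Fin m) (Fin n) ℝ)
    (Q : (Fin n → ℝ) → Ξ → ℝ)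
    (hQ : ∀ x ξ, Q x ξ = lpValue W q (h ξ - (T ξ).mulVec x))
    -- (i) relatively complete recourse
    (hfeas : ∀ x ∈ X, ∀ ξ : Ξ, ∃ z : Fin k → ℝ,
      (∀ i, 0 ≤ z i) ∧ W.mulVec z = h ξ - (T ξ).mulVec x)
    -- (ii) strong duality attainment on the dual feasible set `D = {π : Wᵀπ ≤ q}`
    (hdual : ∀ x ∈ X, ∀ ξ : Ξ, ∃ π : Fin m → ℝ,
      (∀ j, Wᵀ.mulVec π j ≤ q j) ∧ π ⬝ᵥ (h ξ - (T ξ).mulVec x) = Q x ξ)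
    -- (iii) bounded duals
    (Mπ : ℝ) (hMπ : 0 < Mπ)
    (hbdd : ∀ π : Fin m → ℝ, (∀ j, Wᵀ.mulVec π j ≤ q j) → ∀ i, |π i| ≤ Mπ)
    -- (iv) bounded first stage
    (r : ℝ) (hr : ∀ x ∈ X, ∀ i, |x i| ≤ r) :
    ∀ x ∈ X, ∀ ξ ξ' : Ξ,
      |Q x ξ - Q x ξ'|
        ≤ Mπ * ((∑ i, |h ξ i - h ξ' i|) + r * ∑ i, ∑ j, |T ξ i j - T ξ' i j|) := by
  intro x hx ξ ξ'
  set b := h ξ - (T ξ).mulVec x with hb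
  set b' := h ξ' - (T ξ').mulVec x with hb'
  obtain ⟨π, hπf, hπ⟩ := hdual x hx ξ
  obtain ⟨π', hπ'f, hπ'⟩ := hdual x hx ξ'
  obtain ⟨z, hzpos, hzeq⟩ := hfeas x hx ξ
  obtain ⟨z', hz'pos, hz'eq⟩ := hfeas x hx ξ'
  have wd1 : π' ⬝ᵥ b ≤ Q x ξ := by
    rw [hQ]; exact weak_duality W q b π' hπ'f z hzpos hzeq
  have wd2 : π ⬝ᵥ b' ≤ Q x ξ' := by
    rw [hQ]; exact weak_duality W q b' π hπf z' hz'pos hz'eq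
  have key : ∀ τ : Fin m → ℝ, (∀ j, Wᵀ.mulVec τ j ≤ q j) →
      |τ ⬝ᵥ (b - b')| ≤ Mπ * ((∑ i, |h ξ i - h ξ' i|) + r * ∑ i, ∑ j, |T ξ i j - T ξ' i j|) := by
    intro τ hτ
    have h1 : |τ ⬝ᵥ (b - b')| ≤ ∑ i, Mπ * |(b - b') i| := by
      refine (Finset.abs_sum_le_sum_abs _ _).trans (Finset.sum_le_sum fun i _ => ?_)
      rw [abs_mul]
      exact mul_le_mul_of_nonneg_right (hbdd τ hτ i) (abs_nonneg _)
    have h2 : ∀ i, |(b - b') i| ≤ |h ξ i - h ξ' i| + ∑ j, |T ξ i j - T ξ' i j| * r := by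
      intro i
      have : (b - b') i = (h ξ i - h ξ' i) - ∑ j, (T ξ i j - T ξ' i j) * x j := by
        simp [hb, hb', Matrix.mulVec, dotProduct, sub_mul, Finset.sum_sub_distrib]
        ring
      rw [this]
      refine (abs_sub _ _).trans (add_le_add_right ?_ _)
      refine (Finset.abs_sum_le_sum_abs _ _).trans (Finset.sum_le_sum fun j _ => ?_)
      rw [abs_mul]
      exact mul_le_mul_of_nonneg_left (hr x hx j) (abs_nonneg _)
    calc |τ ⬝ᵥ (b - b')| ≤ ∑ i, Mπ * |(b - b') i| := h1
      _ ≤ ∑ i, Mπ * (|h ξ i - h ξ' i| + ∑ j, |T ξ i j - T ξ' i j| * r) :=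
          Finset.sum_le_sum fun i _ => mul_le_mul_of_nonneg_left (h2 i) hMπ.le
      _ = Mπ * ((∑ i, |h ξ i - h ξ' i|) + r * ∑ i, ∑ j, |T ξ i j - T ξ' i j|) := by
          rw [← Finset.mul_sum]
          congr 1
          rw [Finset.sum_add_distrib, Finset.mul_sum]
          congr 1
          exact Finset.sum_congr rfl fun i _ => by rw [Finset.mul_sum]; exact Finset.sum_congr rfl fun j _ => by ring
  have hπb : π ⬝ᵥ b = Q x ξ := hπ
  have hπ'b : π' ⬝ᵥ b' = Q x ξ' := hπ'
  have e1 : π ⬝ᵥ (b - b') = π ⬝ᵥ b - π ⬝ᵥ b' := dotProduct_sub _ _ _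
  have e2 : π' ⬝ᵥ (b - b') = π' ⬝ᵥ b - π' ⬝ᵥ b' := dotProduct_sub _ _ _
  have a1 := (le_abs_self (π ⬝ᵥ (b - b'))).trans (key π hπf)
  have a2 := (neg_le_abs (π' ⬝ᵥ (b - b'))).trans (key π' hπ'f)
  rw [abs_sub_le_iff]
  constructor <;> linarith
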